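/- Define F_β(y) = (y/β)·arctan(αβy) − (1/(2αβ²))·log(1 + α²β²y²) for α > 0, 0 < β < 1, y ∈ ℝ. Then F_β is nonnegative, F_β(0) = 0, its derivative in y equals β^{−1} arctan(αβy) (so F_β is decreasing on (−∞,0] and increasing on [0,∞)), and moreover exp(−F_β(y)) ≤ exp(−|y|/3) whenever |y| ≥ 1/α. -/

import Mathlib

open Real Set

/-- `F_β(y) = (y/β)·arctan(αβy) − (1/(2αβ²))·log(1 + α²β²y²)`. -/
noncomputable def Fbeta (α β y : ℝ) : ℝ :=
  y / β * Real.arctan (α * β * y) -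
    1 / (2 * α * β ^ 2) * Real.log (1 + α ^ 2 * β ^ 2 * y ^ 2)


/-- helper: monotone from derivative on Ici -/
lemma my_mono_aux (f f' : ℝ → ℝ) (a : ℝ) (hf : ∀ x, HasDerivAt f (f' x) x)
    (hf' : ∀ x ∈ Set.Ici a, 0 ≤ f' x) : MonotoneOn f (Set.Ici a) := by
  apply monotoneOn_of_deriv_nonneg (convex_Ici a)
    (fun x _ => (hf x).continuousAt.continuousWithinAt)
  · intro x hx
    exact (hf x).differentiableAt.differentiableWithinAt
  · intro x hx
    rw [(hf x).deriv]
    exact hf' x (interior_subset hx)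

lemma my_mono_aux2 (f f' : ℝ → ℝ) (a b : ℝ) (hf : ∀ x, HasDerivAt f (f' x) x)
    (hf' : ∀ x ∈ Set.Icc a b, 0 ≤ f' x) : MonotoneOn f (Set.Icc a b) := by
  apply monotoneOn_of_deriv_nonneg (convex_Icc a b)
    (fun x _ => (hf x).continuousAt.continuousWithinAt)
  · intro x hx
    exact (hf x).differentiableAt.differentiableWithinAt
  · intro x hx
    rw [(hf x).deriv]
    exact hf' x (interior_subset hx)

lemma my_anti_aux (f f' : ℝ → ℝ) (a : ℝ) (hf : ∀ x, HasDerivAt f (f' x) x)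
    (hf' : ∀ x ∈ Set.Iic a, f' x ≤ 0) : AntitoneOn f (Set.Iic a) := by
  apply antitoneOn_of_deriv_nonpos (convex_Iic a)
    (fun x _ => (hf x).continuousAt.continuousWithinAt)
  · intro x hx
    exact (hf x).differentiableAt.differentiableWithinAt
  · intro x hx
    rw [(hf x).deriv]
    exact hf' x (interior_subset hx)

noncomputable def gg (t : ℝ) : ℝ := t * Real.arctan t - 1/2 * Real.log (1 + t^2)

lemma hasDerivAt_gg (t : ℝ) : HasDerivAt gg (Real.arctan t) t := by
  have h1 : HasDerivAt (fun t : ℝ => t * Real.arctan t)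
      (1 * Real.arctan t + t * (1/(1+t^2))) t :=
    (hasDerivAt_id t).mul (Real.hasDerivAt_arctan t)
  have h0 : HasDerivAt (fun t : ℝ => 1 + t^2) (2*t) t := by
    simpa using (hasDerivAt_pow 2 t).const_add 1
  have h2 : HasDerivAt (fun t : ℝ => Real.log (1+t^2)) ((2*t)/(1+t^2)) t :=
    h0.log (by positivity)
  have := h1.sub (h2.const_mul (1/2))
  refine this.congr_deriv ?_
  have : (0:ℝ) < 1 + t^2 := by positivity
  field_simp
  ring

lemma arctan_nonneg' {t : ℝ} (ht : 0 ≤ t) : 0 ≤ Real.arctan t := by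
  have := Real.arctan_strictMono.monotone ht
  simpa using this

lemma arctan_nonpos' {t : ℝ} (ht : t ≤ 0) : Real.arctan t ≤ 0 := by
  have := Real.arctan_strictMono.monotone ht
  simpa using this

lemma arctan_lb {t : ℝ} (ht : 0 ≤ t) : t - t^3/3 ≤ Real.arctan t := by
  have h : MonotoneOn (fun t => Real.arctan t - t + t^3/3) (Set.Ici 0) := by
    apply my_mono_aux _ (fun t => 1/(1+t^2) - 1 + t^2)
    · intro x
      have := ((Real.hasDerivAt_arctan x).sub (hasDerivAt_id x)).add
        ((hasDerivAt_pow 3 x).div_const 3)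
      refine this.congr_deriv ?_
      simp
    · intro x _
      have h1 : (0:ℝ) < 1 + x^2 := by positivity
      have e : 1/(1+x^2) - 1 + x^2 = x^4/(1+x^2) := by field_simp; ring
      rw [e]; positivity
  have := h (Set.self_mem_Ici) ht ht
  simp at this
  linarith

lemma arctan_lb2 {t : ℝ} (ht : 0 ≤ t) (ht1 : t ≤ 1) : 2*t/3 ≤ Real.arctan t := by
  have h1 := arctan_lb ht
  have h3 : t^3 ≤ t := by nlinarith [mul_nonneg ht (mul_nonneg (sub_nonneg.mpr ht1) (by linarith : (0:ℝ) ≤ 1+t))]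
  linarith

lemma gg_lb {t : ℝ} (ht : 0 ≤ t) (ht1 : t ≤ 1) : t^2/3 ≤ gg t := by
  have h : MonotoneOn (fun t => gg t - t^2/3) (Set.Icc 0 1) := by
    apply my_mono_aux2 _ (fun t => Real.arctan t - 2*t/3)
    · intro x
      have := (hasDerivAt_gg x).sub ((hasDerivAt_pow 2 x).div_const 3)
      refine this.congr_deriv ?_
      simp
    · intro x hx
      have := arctan_lb2 hx.1 hx.2
      linarith
  have := h (Set.left_mem_Icc.mpr zero_le_one) ⟨ht, ht1⟩ ht
  have h0 : gg 0 = 0 := by simp [gg]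
  simp only [h0] at this
  linarith

lemma gg_lb2 {β t : ℝ} (hβ : 0 < β) (hβ1 : β ≤ 1) (ht : β ≤ t) : β*t/3 ≤ gg t := by
  have h : MonotoneOn (fun t => gg t - β*t/3) (Set.Ici β) := by
    apply my_mono_aux _ (fun t => Real.arctan t - β/3)
    · intro x
      have := (hasDerivAt_gg x).sub ((hasDerivAt_id x).const_mul β |>.div_const 3)
      refine this.congr_deriv ?_
      simp
    · intro x hx
      have h1 : Real.arctan β ≤ Real.arctan x := Real.arctan_strictMono.monotone hx
      have h2 := arctan_lb2 hβ.le hβ1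
      simp only [Set.mem_Ici] at hx
      linarith
  have := h (Set.self_mem_Ici) ht ht
  have hg := gg_lb hβ.le hβ1
  simp only at this
  nlinarith



lemma hasDerivAt_Fbeta (α β : ℝ) (hα : 0 < α) (hβ : 0 < β) (y : ℝ) :
    HasDerivAt (Fbeta α β) (β⁻¹ * Real.arctan (α * β * y)) y := by
  have hfun : Fbeta α β = fun y => y / β * Real.arctan (α * β * y) -
      1 / (2 * α * β ^ 2) * Real.log (1 + α ^ 2 * β ^ 2 * y ^ 2) := rfl
  rw [hfun]
  have hin : HasDerivAt (fun y : ℝ => α*β*y) (α*β) y := by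
    simpa using (hasDerivAt_id y).const_mul (α*β)
  have h1 : HasDerivAt (fun y : ℝ => y / β * Real.arctan (α*β*y))
      (1/β * Real.arctan (α*β*y) + y/β * (1/(1+(α*β*y)^2) * (α*β))) y :=
    ((hasDerivAt_id y).div_const β).mul ((Real.hasDerivAt_arctan (α*β*y)).comp y hin)
  have h0 : HasDerivAt (fun y : ℝ => 1 + α^2*β^2*y^2) (α^2*β^2*(2*y)) y := by
    have := ((hasDerivAt_pow 2 y).const_mul (α^2*β^2)).const_add 1
    refine this.congr_deriv ?_
    simp
  have hpos : (0:ℝ) < 1 + α^2*β^2*y^2 := by positivity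
  have h2 := (h0.log (ne_of_gt hpos)).const_mul (1/(2*α*β^2))
  have h3 : (0:ℝ) < 1 + (α*β*y)^2 := by positivity
  have := h1.sub h2
  refine this.congr_deriv ?_
  field_simp
  ring


/-- Properties of `F_β`: nonnegativity, `F_β(0)=0`, the derivative formula
`F_β'(y) = β⁻¹ arctan(αβy)` (so `F_β` is decreasing on `(−∞,0]` and
increasing on `[0,∞)`), and the exponential tail bound
`exp(−F_β(y)) ≤ exp(−|y|/3)` for `|y| ≥ 1/α`. -/
theorem stmt12 (α β : ℝ) (hα : 0 < α) (hβ : 0 < β) (hβ1 : β < 1) :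
    (∀ y : ℝ, 0 ≤ Fbeta α β y) ∧
    Fbeta α β 0 = 0 ∧
    (∀ y : ℝ, HasDerivAt (Fbeta α β) (β⁻¹ * Real.arctan (α * β * y)) y) ∧
    AntitoneOn (Fbeta α β) (Set.Iic 0) ∧
    MonotoneOn (Fbeta α β) (Set.Ici 0) ∧
    (∀ y : ℝ, 1 / α ≤ |y| → Real.exp (-Fbeta α β y) ≤ Real.exp (-|y| / 3)) := by
  have hD := hasDerivAt_Fbeta α β hα hβ
  have h0 : Fbeta α β 0 = 0 := by simp [Fbeta]
  have hmono : MonotoneOn (Fbeta α β) (Set.Ici 0) := by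
    apply my_mono_aux _ _ 0 hD
    intro x hx
    simp only [Set.mem_Ici] at hx
    exact mul_nonneg (inv_nonneg.mpr hβ.le) (arctan_nonneg' (by positivity))
  have hanti : AntitoneOn (Fbeta α β) (Set.Iic 0) := by
    apply my_anti_aux _ _ 0 hD
    intro x hx
    simp only [Set.mem_Iic] at hx
    have habx : α*β*x ≤ 0 := by nlinarith [mul_pos hα hβ]
    have := arctan_nonpos' habx
    have hβi : 0 ≤ β⁻¹ := inv_nonneg.mpr hβ.le
    exact mul_nonpos_of_nonneg_of_nonpos hβi this
  have hnn : ∀ y : ℝ, 0 ≤ Fbeta α β y := by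
    intro y
    rcases le_total y 0 with hy | hy
    · have := hanti hy (Set.self_mem_Iic) hy
      linarith [h0 ▸ this]
    · have := hmono (Set.self_mem_Ici) hy hy
      linarith [h0 ▸ this]
  refine ⟨hnn, h0, hD, hanti, hmono, ?_⟩
  intro y hy
  have hFeven : Fbeta α β y = Fbeta α β |y| := by
    rcases abs_cases y with ⟨h, _⟩ | ⟨h, _⟩
    · rw [h]
    · rw [h]
      simp only [Fbeta, mul_neg, Real.arctan_neg, neg_sq]
      ring
  set z := |y| with hzdef
  have hz0 : 0 < z := lt_of_lt_of_le (by positivity) hy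
  have hαz : 1 ≤ z * α := (div_le_iff₀ hα).mp hy
  have ht : β ≤ α*β*z := by nlinarith
  have key := gg_lb2 hβ hβ1.le ht
  have hFeq : Fbeta α β z = 1/(α*β^2) * gg (α*β*z) := by
    have e : α^2*β^2*z^2 = (α*β*z)^2 := by ring
    simp only [Fbeta, gg, e]
    field_simp
  have hle : z/3 ≤ Fbeta α β z := by
    rw [hFeq]
    calc z/3 = 1/(α*β^2)*(β*(α*β*z)/3) := by field_simp
    _ ≤ 1/(α*β^2) * gg (α*β*z) := by
        apply mul_le_mul_of_nonneg_left key (by positivity)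
  apply Real.exp_le_exp.mpr
  rw [hFeven]
  linarith
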